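/- Let r > 0 and let A = A_{{(1,2)}}(r) ∈ M_{3×3}(ℝ) be the symmetric matrix with zero diagonal, A₁₂ = A₂₁ = r, and all other off-diagonal entries equal to 1. For r = 4, the minimum over the simplex 𝒮² = {v ∈ ℝ³ : vᵢ ≥ 0, Σvᵢ = 3} of φ_A(v) = (vᵀA𝟙₃)/(vᵀAv) (taken over v with vᵀAv > 0) equals 5/6. -/

import Mathlib

open Matrix
open scoped BigOperators

theorem stmt_13 :
    IsLeast
      {x : ℝ | ∃ v : Fin 3 → ℝ, (∀ i, 0 ≤ v i) ∧ (∑ i, v i) = 3 ∧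
        0 < v ⬝ᵥ ((!![0, 4, 1; 4, 0, 1; 1, 1, 0] : Matrix (Fin 3) (Fin 3) ℝ) *ᵥ v) ∧
        x = (v ⬝ᵥ ((!![0, 4, 1; 4, 0, 1; 1, 1, 0] : Matrix (Fin 3) (Fin 3) ℝ) *ᵥ 1)) /
            (v ⬝ᵥ ((!![0, 4, 1; 4, 0, 1; 1, 1, 0] : Matrix (Fin 3) (Fin 3) ℝ) *ᵥ v))}
      (5 / 6) := by
  constructor
  · refine ⟨![3/2, 3/2, 0], ?_, ?_, ?_, ?_⟩
    · intro i; fin_cases i <;> norm_num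
    · simp [Fin.sum_univ_three]
    · norm_num [dotProduct, Matrix.mulVec, Fin.sum_univ_three, Matrix.cons_val_two, Matrix.tail_cons]
    · norm_num [dotProduct, Matrix.mulVec, Fin.sum_univ_three, Matrix.cons_val_two, Matrix.tail_cons]
  · rintro x ⟨v, hv, hsum, hpos, rfl⟩
    have ha := hv 0
    have hb := hv 1
    have hc := hv 2
    norm_num [dotProduct, Matrix.mulVec, Fin.sum_univ_three, Matrix.cons_val_two, Matrix.tail_cons] at hpos hsum ⊢
    rw [le_div_iff₀ hpos]
    nlinarith [sq_nonneg (v 0 - v 1), mul_nonneg hc ha, mul_nonneg hc hb,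
        sq_nonneg (v 2)]
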